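/- Let R be a commutative ring and let P, Q be polynomials over R with natDegree P ≥ 1 and natDegree Q ≥ 1. Then there exist polynomials U and V over R with natDegree U < natDegree Q and natDegree V < natDegree P such that U·P + V·Q equals the constant polynomial C(Res(P, Q)). -/

import Mathlib

open Polynomial

/-- The Sylvester matrix of two polynomials `P` and `Q` over a commutative ring:
a square matrix of size `natDegree P + natDegree Q` whose first `natDegree Q` rows
are the coefficient vectors of `X ^ i * P` (for `0 ≤ i < natDegree Q`) and whose
remaining rows are the coefficient vectors of `X ^ i * Q` (for `0 ≤ i < natDegree P`). -/
noncomputable def sylvesterMatrix {R : Type*} [CommRing R] (P Q : Polynomial R) :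
    Matrix (Fin (P.natDegree + Q.natDegree)) (Fin (P.natDegree + Q.natDegree)) R :=
  fun i j =>
    if (i : ℕ) < Q.natDegree then (X ^ (i : ℕ) * P).coeff j
    else (X ^ ((i : ℕ) - Q.natDegree) * Q).coeff j

/-- The resultant of two polynomials: the determinant of their Sylvester matrix. -/
noncomputable def resultant {R : Type*} [CommRing R] (P Q : Polynomial R) : R :=
  (sylvesterMatrix P Q).det

/-- Bézout's 'équation-somme': the resultant of `P` and `Q` is a combination
`U·P + V·Q` with `natDegree U < natDegree Q` and `natDegree V < natDegree P`. -/
theorem resultant_eq_comb {R : Type*} [CommRing R]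
    (P Q : Polynomial R) (hP : 1 ≤ P.natDegree) (hQ : 1 ≤ Q.natDegree) :
    ∃ U V : Polynomial R, U.natDegree < Q.natDegree ∧ V.natDegree < P.natDegree ∧
      U * P + V * Q = C (_root_.resultant P Q) := by
  classical
  set n := P.natDegree with hn
  set m := Q.natDegree with hm
  have hN : 0 < n + m := by omega
  set M := sylvesterMatrix P Q with hMdef
  set c : Fin (n + m) → R := fun i => M.adjugate ⟨0, hN⟩ i with hc
  have hmul : ∀ j : Fin (n + m),
      (∑ i, c i * M i j) = if (⟨0, hN⟩ : Fin (n + m)) = j then M.det else 0 := by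
    intro j
    have h2 := congrFun (congrFun (Matrix.adjugate_mul M) ⟨0, hN⟩) j
    simpa [Matrix.mul_apply, Matrix.one_apply, hc, mul_comm] using h2
  set rowPoly : Fin (n + m) → Polynomial R := fun i =>
    if (i : ℕ) < m then X ^ (i : ℕ) * P else X ^ ((i : ℕ) - m) * Q with hrow
  have hdeg : ∀ i : Fin (n + m), (rowPoly i).natDegree < n + m := by
    intro i
    by_cases h : (i : ℕ) < m
    · have : (X ^ (i : ℕ) * P).natDegree ≤ (i : ℕ) + n := by
        exact natDegree_mul_le.trans (add_le_add (natDegree_X_pow_le _) le_rfl)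
      simp only [hrow, if_pos h]
      omega
    · have : (X ^ ((i : ℕ) - m) * Q).natDegree ≤ ((i : ℕ) - m) + m := by
        exact natDegree_mul_le.trans (add_le_add (natDegree_X_pow_le _) le_rfl)
      simp only [hrow, if_neg h]
      have := i.isLt
      omega
  have hcoeff : ∀ (i : Fin (n + m)) (j : Fin (n + m)),
      (rowPoly i).coeff j = M i j := by
    intro i j
    by_cases h : (i : ℕ) < m
    · simp [hrow, hMdef, sylvesterMatrix, h, hm]
      split_ifs <;> rfl
    · simp [hrow, hMdef, sylvesterMatrix, h, hm]
      split_ifs <;> rfl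
  -- the key identity
  have hkey : (∑ i, C (c i) * rowPoly i) = C M.det := by
    ext k
    rw [finset_sum_coeff]
    simp only [coeff_C_mul]
    by_cases hk : k < n + m
    · have : ∀ i : Fin (n + m), c i * (rowPoly i).coeff k = c i * M i ⟨k, hk⟩ := by
        intro i; rw [hcoeff i ⟨k, hk⟩]
      rw [Finset.sum_congr rfl fun i _ => this i, hmul ⟨k, hk⟩]
      by_cases hk0 : k = 0
      · subst hk0; simp
      · have : (⟨0, hN⟩ : Fin (n + m)) ≠ ⟨k, hk⟩ := by
          intro hcon
          exact hk0 ((Fin.mk.injEq _ _ _ _ ▸ hcon) ▸ rfl)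
        simp only [if_neg this, coeff_C, if_neg hk0]
    · have : ∀ i : Fin (n + m), c i * (rowPoly i).coeff k = 0 := by
        intro i
        rw [coeff_eq_zero_of_natDegree_lt (lt_of_lt_of_le (hdeg i) (by omega))]
        ring
      rw [Finset.sum_congr rfl fun i _ => this i]
      have : k ≠ 0 := by omega
      simp [coeff_C, this]
  refine ⟨∑ i : Fin (n + m), if (i : ℕ) < m then C (c i) * X ^ (i : ℕ) else 0,
          ∑ i : Fin (n + m), if (i : ℕ) < m then 0 else C (c i) * X ^ ((i : ℕ) - m),
          ?_, ?_, ?_⟩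
  · refine lt_of_le_of_lt (natDegree_sum_le_of_forall_le _ _ fun i _ => ?_) (by omega : m - 1 < m)
    by_cases h : (i : ℕ) < m
    · simp only [if_pos h]
      refine le_trans (natDegree_mul_le) ?_
      have := natDegree_X_pow_le (R := R) (i : ℕ)
      simp only [natDegree_C]
      omega
    · simp [if_neg h]
  · refine lt_of_le_of_lt (natDegree_sum_le_of_forall_le _ _ fun i _ => ?_) (by omega : n - 1 < n)
    by_cases h : (i : ℕ) < m
    · simp [if_pos h]
    · simp only [if_neg h]
      refine le_trans (natDegree_mul_le) ?_
      have h1 := natDegree_X_pow_le (R := R) ((i : ℕ) - m)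
      have h2 := i.isLt
      simp only [natDegree_C]
      omega
  · rw [Finset.sum_mul, Finset.sum_mul, ← Finset.sum_add_distrib]
    rw [show (_root_.resultant P Q) = M.det from rfl, ← hkey]
    refine Finset.sum_congr rfl fun i _ => ?_
    by_cases h : (i : ℕ) < m <;> simp [hrow, h] <;> ring
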